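/- Suppose a sequence x_1,...,x_L with predictions ŷ_1,...,ŷ_L satisfies: x is a threshold sequence at level x ≤ 1/2, meaning x_t = 1 whenever ŷ_t < x and x_t = 0 whenever ŷ_t ≥ x. Then the regret relative to the constant x satisfies (1/L)∑[(x_t-ŷ_t)^2 - (x_t-x)^2] ≥ (2x/L)∑|x - ŷ_t|. Consequently, if the regret relative to the empirical mean is at most R, then at least half of the indices t satisfy |ŷ_t - x| ≤ R/x. -/

import Mathlib

/-- Threshold sequence at level x ≤ 1/2: the regret relative to the constant x is at
least (2x/L)∑|x−ŷₜ|; consequently if the regret relative to the empirical mean is at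
most R then at least half the predictions are within R/x of x. -/
theorem threshold_sequence_concentration (L : ℕ) (hL : 1 ≤ L) (x : ℝ)
    (hx : 0 < x) (hx2 : x ≤ 1 / 2) (xs ys : Fin L → ℝ)
    (hxs : ∀ t, xs t = 0 ∨ xs t = 1) (hys : ∀ t, ys t ∈ Set.Icc (0 : ℝ) 1)
    (hthr : ∀ t, (ys t < x → xs t = 1) ∧ (x ≤ ys t → xs t = 0)) :
    ((1 / L) * ∑ t, ((xs t - ys t) ^ 2 - (xs t - x) ^ 2)
        ≥ (2 * x / L) * ∑ t, |x - ys t|)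
    ∧ (∀ R : ℝ,
        (1 / L) * ∑ t, (xs t - ys t) ^ 2
            - (1 / L) * ∑ t, (xs t - (∑ s, xs s) / L) ^ 2 ≤ R →
        L ≤ 2 * (Finset.univ.filter (fun t => |ys t - x| ≤ R / x)).card) := by
  have hL0 : (0:ℝ) < (L:ℝ) := by exact_mod_cast hL
  -- pointwise key inequality
  have key : ∀ t, 2 * x * |x - ys t| ≤ (xs t - ys t) ^ 2 - (xs t - x) ^ 2 := by
    intro t
    rcases hxs t with h0 | h1
    · have hxy : x ≤ ys t := by
        by_contra h
        have := (hthr t).1 (not_le.mp h)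
        rw [h0] at this; norm_num at this
      rw [h0, abs_of_nonpos (by linarith)]
      nlinarith
    · have hxy : ys t < x := by
        by_contra h
        have := (hthr t).2 (not_lt.mp h)
        rw [h1] at this; norm_num at this
      have hy1 := (hys t).2
      rw [h1, abs_of_nonneg (by linarith)]
      nlinarith
  have sumkey : 2 * x * ∑ t, |x - ys t|
      ≤ ∑ t, ((xs t - ys t) ^ 2 - (xs t - x) ^ 2) := by
    rw [Finset.mul_sum]
    exact Finset.sum_le_sum fun t _ => key t
  have part1 : (1 / (L:ℝ)) * ∑ t, ((xs t - ys t) ^ 2 - (xs t - x) ^ 2)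
      ≥ (2 * x / L) * ∑ t, |x - ys t| := by
    have h : (2 * x / (L:ℝ)) * ∑ t, |x - ys t|
        = (1 / (L:ℝ)) * (2 * x * ∑ t, |x - ys t|) := by ring
    rw [ge_iff_le, h]
    have hpos : (0:ℝ) ≤ 1 / (L:ℝ) := by positivity
    exact mul_le_mul_of_nonneg_left sumkey hpos
  refine ⟨part1, ?_⟩
  intro R hR
  set S := ∑ s, xs s with hS
  set m := S / (L:ℝ) with hm
  have hSm : (L:ℝ) * m = S := by
    rw [hm]; field_simp
  -- mean minimizes the sum of squares
  have expand : ∀ c : ℝ, ∑ t, (xs t - c) ^ 2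
      = (∑ t, (xs t) ^ 2) - 2 * c * S + L * c ^ 2 := by
    intro c
    have : ∀ t : Fin L, (xs t - c) ^ 2 = (xs t) ^ 2 - 2 * c * xs t + c ^ 2 := by
      intro t; ring
    rw [Finset.sum_congr rfl fun t _ => this t]
    rw [Finset.sum_add_distrib, Finset.sum_sub_distrib, ← Finset.mul_sum,
      Finset.sum_const, Finset.card_univ, Fintype.card_fin, nsmul_eq_mul, ← hS]
  have hmean : ∑ t, (xs t - m) ^ 2 ≤ ∑ t, (xs t - x) ^ 2 := by
    rw [expand m, expand x]
    nlinarith [mul_nonneg hL0.le (sq_nonneg (x - m)), hSm]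
  -- regret vs constant x is at most R
  have hRx : (1 / (L:ℝ)) * ∑ t, ((xs t - ys t) ^ 2 - (xs t - x) ^ 2) ≤ R := by
    rw [Finset.sum_sub_distrib, mul_sub]
    have h2 : (1 / (L:ℝ)) * ∑ t, (xs t - m) ^ 2 ≤ (1 / (L:ℝ)) * ∑ t, (xs t - x) ^ 2 :=
      mul_le_mul_of_nonneg_left hmean (by positivity)
    calc (1 / (L:ℝ)) * ∑ t, (xs t - ys t) ^ 2 - (1 / (L:ℝ)) * ∑ t, (xs t - x) ^ 2
        ≤ (1 / (L:ℝ)) * ∑ t, (xs t - ys t) ^ 2 - (1 / (L:ℝ)) * ∑ t, (xs t - m) ^ 2 := by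
          linarith
      _ ≤ R := hR
  have hB : (2 * x / L) * ∑ t, |x - ys t| ≤ R := le_trans part1 hRx
  set B := ∑ t, |x - ys t| with hBdef
  have hB0 : 0 ≤ B := Finset.sum_nonneg fun t _ => abs_nonneg _
  have hBle : B ≤ R * L / (2 * x) := by
    rw [div_mul_eq_mul_div, div_le_iff₀ hL0] at hB
    rw [le_div_iff₀ (by positivity)]
    linarith
  have hR0 : 0 ≤ R := le_trans (by positivity) hB
  classical
  set good := Finset.univ.filter (fun t => |ys t - x| ≤ R / x) with hgood
  set bad := Finset.univ.filter (fun t => ¬ |ys t - x| ≤ R / x) with hbad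
  have hcards : good.card + bad.card = L := by
    rw [hgood, hbad, Finset.card_filter_add_card_filter_not,
      Finset.card_univ, Fintype.card_fin]
  have hbadsum : (bad.card : ℝ) * (R / x) ≤ B := by
    calc (bad.card : ℝ) * (R / x) ≤ ∑ t ∈ bad, |x - ys t| := by
          have h := Finset.card_nsmul_le_sum bad (fun t => |x - ys t|) (R / x)
            (fun t ht => by
              have h2 := (Finset.mem_filter.mp ht).2
              show R / x ≤ |x - ys t|
              rw [abs_sub_comm]
              linarith [not_le.mp h2])
          simpa [nsmul_eq_mul] using h
      _ ≤ B := Finset.sum_le_sum_of_subset_of_nonneg (Finset.subset_univ _)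
          (fun t _ _ => abs_nonneg _)
  have hbadR : (bad.card : ℝ) * R ≤ R * L / 2 := by
    have h := le_trans hbadsum hBle
    rw [← mul_div_assoc, div_le_div_iff₀ (by positivity) (by positivity)] at h
    nlinarith [hx, h]
  rcases eq_or_lt_of_le hR0 with hReq | hRpos
  · -- R = 0 : bad must be empty
    have hbadempty : bad = ∅ := by
      by_contra hne
      obtain ⟨t, ht⟩ := Finset.nonempty_of_ne_empty hne
      have h1 := (Finset.mem_filter.mp ht).2
      have h2 : 0 < |ys t - x| := lt_of_le_of_lt (by rw [← hReq]; positivity) (not_le.mp h1)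
      have hterm : |x - ys t| ≤ B := by
        exact Finset.single_le_sum (f := fun s => |x - ys s|) (fun s _ => abs_nonneg _) (Finset.mem_univ t)
      have hBzero : B ≤ 0 := by
        have := hBle; rw [← hReq] at this; simpa using this
      rw [abs_sub_comm] at h2
      linarith
    have : bad.card = 0 := by rw [hbadempty]; simp
    omega
  · -- R > 0
    have h2b : 2 * (bad.card : ℝ) ≤ (L:ℝ) := by
      have hRpos' : 0 < R := hRpos
      nlinarith [hbadR]
    have h2b' : 2 * bad.card ≤ L := by exact_mod_cast h2b
    omega
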